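/- arXiv:math/0504296 — 3 statements merged into one kernel-verified Lean document; each statement's English description precedes it below -/
import Mathlib

section
/- If (C,Δ) is a nonassociative permutative coalgebra, then for each k ≥ 1 the image of the iterated coproduct Δᵏ: C → C^{⊗(k+1)} lies in the invariants of C^{⊗(k+1)} under the subgroup Σ₁ × Σ_k of Σ_{k+1} permuting the last k tensor factors. -/
open TensorProduct

variable (K : Type) [Field K] (H : Type) [AddCommGroup H] [Module K H]

/-- The iterated tensor power `H^{⊗(n+1)}`, left-nested. -/
noncomputable def TPc : ℕ → ModuleCat.{0} K
  | 0 => ModuleCat.of K H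
  | n + 1 => ModuleCat.of K (TensorProduct K (TPc n) H)

abbrev TP (n : ℕ) : Type := (TPc K H n : Type)

variable (Δ : H →ₗ[K] TensorProduct K H H)

/-- Apply `Δ` to the first tensor factor: `Δ ⊗ Id^{⊗n}`. -/
noncomputable def expDelta : ∀ n, TP K H n →ₗ[K] TP K H (n + 1)
  | 0 => Δ
  | n + 1 => LinearMap.rTensor H (expDelta n)

/-- The iterated coproduct `Δⁿ : H → H^{⊗(n+1)}`, `Δ⁰ = Id`,
`Δ^{n+1} = (Δ ⊗ Id^{⊗n})Δⁿ`. -/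
noncomputable def DIter : ∀ n, H →ₗ[K] TP K H n
  | 0 => LinearMap.id
  | n + 1 => expDelta K H Δ n ∘ₗ DIter n

/-- Swap the last two tensor factors of `H^{⊗(n+3)}`. -/
noncomputable def swapLastTwo (n : ℕ) : TP K H (n + 2) →ₗ[K] TP K H (n + 2) :=
  (TensorProduct.assoc K (TP K H n) H H).symm.toLinearMap ∘ₗ
    LinearMap.lTensor (TP K H n) (TensorProduct.comm K H H).toLinearMap ∘ₗ
      (TensorProduct.assoc K (TP K H n) H H).toLinearMap

/-- The linear map on `H^{⊗(n+1)}` permuting the tensor factors in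
positions `i` and `i+1` (positions numbered `0,…,n`). -/
noncomputable def swapAdj : ∀ (n i : ℕ), TP K H n →ₗ[K] TP K H n
  | 0, _ => LinearMap.id
  | 1, 0 => (TensorProduct.comm K H H).toLinearMap
  | 1, _ + 1 => LinearMap.id
  | n + 2, i =>
    if i = n + 1 then swapLastTwo K H n
    else LinearMap.rTensor H (swapAdj (n + 1) i)

/-- Derivation (right-module) action of `y ∈ H` on `H^{⊗(n+1)}`:
`(x₁⊗…⊗xₘ)∘y = Σᵢ x₁⊗…⊗xᵢ∘y⊗…⊗xₘ`. -/
noncomputable def mOp (μ : H →ₗ[K] H →ₗ[K] H) (y : H) :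
    ∀ n, TP K H n →ₗ[K] TP K H n
  | 0 => μ.flip y
  | n + 1 =>
    LinearMap.rTensor H (mOp μ y n) + LinearMap.lTensor (TP K H n) (μ.flip y)

/-- Insertion operator `δ_y : H^{⊗(n+1)} → H^{⊗(n+2)}`,
`δ_y(x₁⊗…⊗xₘ) = Σᵢ x₁⊗…⊗xᵢ⊗y⊗xᵢ₊₁⊗…⊗xₘ` (inserting `y` after each factor). -/
noncomputable def dOp (y : H) : ∀ n, TP K H n →ₗ[K] TP K H (n + 1)
  | 0 => (TensorProduct.mk K H H).flip y
  | n + 1 =>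
    (show TP K H (n + 1) →ₗ[K] TP K H (n + 2) from
      LinearMap.rTensor H (dOp y n)) +
      (show TP K H (n + 1) →ₗ[K] TP K H (n + 2) from
        (TensorProduct.mk K (TP K H (n + 1)) H).flip y)

/-- Canonical splitting `H^{⊗(m+n+2)} ≅ H^{⊗(m+1)} ⊗ H^{⊗(n+1)}`. -/
noncomputable def splitE : ∀ (m n : ℕ),
    TP K H (m + n + 1) ≃ₗ[K] TensorProduct K (TP K H m) (TP K H n)
  | m, 0 => LinearEquiv.refl K (TP K H (m + 1))
  | m, n + 1 =>
    (TensorProduct.congr (splitE m n) (LinearEquiv.refl K H)).trans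
      (TensorProduct.assoc K (TP K H m) (TP K H n) H)

/-- Cast along an equality of indices. -/
noncomputable def tcast {m n : ℕ} (h : m = n) : TP K H m ≃ₗ[K] TP K H n := by
  subst h; exact LinearEquiv.refl K (TP K H m)

/-- The operators `A_{k+1} : H^{⊗(k+1)} → H` of Livernet: `A₁ = Id`, `A₂ = μ`,
`A_{k+1} = Σ_{l=1}^{k} C(k−1,l−1) μ(A_l ⊗ A_{k+1−l})`; here `Aop k = A_{k+1}`. -/
noncomputable def Aop (μ : H →ₗ[K] H →ₗ[K] H) : ∀ k, TP K H k →ₗ[K] H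
  | 0 => LinearMap.id
  | k + 1 =>
    ∑ j ∈ (Finset.range (k + 1)).attach,
      (Nat.choose k j.1 : K) •
        (TensorProduct.lift μ ∘ₗ
          TensorProduct.map (Aop μ j.1) (Aop μ (k - j.1)) ∘ₗ
            (splitE K H j.1 (k - j.1)).toLinearMap ∘ₗ
              (tcast K H (show k + 1 = j.1 + (k - j.1) + 1 by
                have := Finset.mem_range.mp j.2; omega)).toLinearMap)
  termination_by k => k
  decreasing_by
  · have := Finset.mem_range.mp j.2; omega
  · have := Finset.mem_range.mp j.2; omega

section Cfil
variable {K} (M : Type) [AddCommGroup M] [Module K M]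

/-- The subspace `p ⊗ q` of `M ⊗ M` spanned by tensors of elements of the
submodules `p` and `q`. -/
noncomputable def tensSub (p q : Submodule K M) :
    Submodule K (TensorProduct K M M) :=
  LinearMap.range (TensorProduct.map p.subtype q.subtype)

/-- The coradical-type filtration of `(C,Δ)`:
`C₁ = ker Δ`, `Cₙ = {x | Δ(x) ∈ Σ_{i=1}^{n−1} C_i ⊗ C_{n−i}}` (and `C₀ = 0`). -/
noncomputable def Cfil (D : M →ₗ[K] TensorProduct K M M) : ℕ → Submodule K M
  | 0 => ⊥
  | n + 1 =>
    Submodule.comap D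
      (∑ j ∈ (Finset.range n).attach,
        tensSub M (Cfil D (j.1 + 1)) (Cfil D (n - j.1)))
  termination_by n => n
  decreasing_by
  · have := Finset.mem_range.mp j.2; omega
  · have := Finset.mem_range.mp j.2; omega

end Cfil

/-- Multiply the last tensor factor of `H^{⊗(p+1)}` by an element of `H`. -/
noncomputable def mulLast (μ : H →ₗ[K] H →ₗ[K] H) :
    ∀ p, TensorProduct K (TP K H p) H →ₗ[K] TP K H p
  | 0 => TensorProduct.lift μ
  | p + 1 =>
    LinearMap.lTensor (TP K H p) (TensorProduct.lift μ) ∘ₗ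
      (TensorProduct.assoc K (TP K H p) H H).toLinearMap

/-- `join p q : H^{⊗(p+1)} ⊗ H^{⊗(q+1)} → H^{⊗(p+q+1)}` multiplies the last
factor of the first block with the first factor of the second block. -/
noncomputable def joinMul (μ : H →ₗ[K] H →ₗ[K] H) :
    ∀ p q, TensorProduct K (TP K H p) (TP K H q) →ₗ[K] TP K H (p + q)
  | p, 0 => mulLast K H μ p
  | p, q + 1 =>
    (show TensorProduct K (TP K H p) (TP K H (q + 1)) →ₗ[K] TP K H (p + (q + 1))
      from LinearMap.rTensor H (joinMul μ p q) ∘ₗ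
        (TensorProduct.assoc K (TP K H p) (TP K H q) H).symm.toLinearMap)

variable (μ : H →ₗ[K] H →ₗ[K] H)

lemma DIter_succ_eq : ∀ k, DIter K H Δ (k + 1)
    = LinearMap.rTensor H (DIter K H Δ k) ∘ₗ Δ
  | 0 => by
    show expDelta K H Δ 0 ∘ₗ LinearMap.id = _
    erw [show DIter K H Δ 0 = LinearMap.id from rfl, LinearMap.rTensor_id]
    rfl
  | k + 1 => by
    show expDelta K H Δ (k + 1) ∘ₗ DIter K H Δ (k + 1) = _
    conv_lhs => rw [DIter_succ_eq k]
    erw [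
      show expDelta K H Δ (k + 1) = LinearMap.rTensor H (expDelta K H Δ k) from rfl,
      ← LinearMap.comp_assoc, ← LinearMap.rTensor_comp]
    rfl

lemma swapLastTwo_natural {a b : ℕ} (f : TP K H a →ₗ[K] TP K H b) :
    swapLastTwo K H b ∘ₗ LinearMap.rTensor H (LinearMap.rTensor H f)
      = LinearMap.rTensor H (LinearMap.rTensor H f) ∘ₗ swapLastTwo K H a := by
  apply TensorProduct.ext
  apply TensorProduct.ext
  ext x y z
  rfl

lemma swapAdj_last (n : ℕ) : swapAdj K H (n + 2) (n + 1) = swapLastTwo K H n := by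
  rw [swapAdj]; simp

lemma swapAdj_rT (n i : ℕ) (h : i ≠ n + 1) :
    swapAdj K H (n + 2) i = LinearMap.rTensor H (swapAdj K H (n + 1) i) := by
  rw [swapAdj]; simp [h]
  rfl

/-- If `(C,Δ)` is a nonassociative permutative coalgebra
(`(1 − τ₂₃)(Δ ⊗ Id)Δ = 0`), then for each `k ≥ 1` the image of the iterated
coproduct `Δᵏ : C → C^{⊗(k+1)}` lies in the invariants under `Σ₁ × Σ_k`
permuting the last `k` tensor factors.  Invariance under the subgroup
`Σ₁ × Σ_k` is expressed by invariance under its generating adjacent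
transpositions `(i, i+1)` for `1 ≤ i ≤ k−1`, acting as `swapAdj k i`. -/
theorem nap_coalgebra_DIter_invariant
    (hnap : swapAdj K H 2 1 ∘ₗ DIter K H Δ 2 = DIter K H Δ 2) :
    ∀ k i : ℕ, 1 ≤ i → i < k →
      swapAdj K H k i ∘ₗ DIter K H Δ k = DIter K H Δ k := by
  intro k
  induction k with
  | zero => intro i h1 h2; omega
  | succ k ih =>
    intro i h1 h2
    rcases Nat.lt_or_ge i k with hik | hik
    · -- i < k, so k ≥ 2; swapAdj (k+1) i = rTensor of swapAdj k i
      obtain ⟨k', rfl⟩ : ∃ k', k = k' + 1 := ⟨k - 1, by omega⟩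
      erw [swapAdj_rT K H k' i (by omega), DIter_succ_eq,
        ← LinearMap.comp_assoc, ← LinearMap.rTensor_comp, ih i h1 hik]
      rfl
    · -- i = k
      have hik : i = k := by omega
      subst hik
      match i, h1 with
      | 1, _ => exact hnap
      | (m + 2), _ =>
        erw [swapAdj_last,
          show DIter K H Δ (m + 3) = expDelta K H Δ (m + 2) ∘ₗ DIter K H Δ (m + 2)
            from rfl,
          show expDelta K H Δ (m + 2)
              = LinearMap.rTensor H (LinearMap.rTensor H (expDelta K H Δ m)) from rfl,
          ← LinearMap.comp_assoc, swapLastTwo_natural, LinearMap.comp_assoc,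
          show swapLastTwo K H m = swapAdj K H (m + 2) (m + 1)
            from (swapAdj_last K H m).symm,
          ih (m + 1) (by omega) (by omega)]
        rfl
end

section
/- Let H be a vector space with a pre-Lie product ∘ and a coproduct Δ satisfying the distributive law Δ(x∘y) = x⊗y + Δ(x)∘y, where H^{⊗2} is a right H-module by derivations. Then for every k ≥ 1, Δᵏ(x∘y) = Δᵏ(x)∘y + δ_y(Δ^{k−1}(x)), where δ_y: H^{⊗k} → H^{⊗(k+1)} inserts y in all positions after the first: δ_y(x₁⊗…⊗x_k) = Σ_{i=1}^{k} x₁⊗…⊗x_i⊗y⊗x_{i+1}⊗…⊗x_k. -/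
open TensorProduct

variable (K : Type) [Field K] (H : Type) [AddCommGroup H] [Module K H]

variable (Δ : H →ₗ[K] TensorProduct K H H)

/-- Insertion of `y` after the first tensor factor. -/
noncomputable def Bop (y : H) : ∀ n, TP K H n →ₗ[K] TP K H (n + 1)
  | 0 => (TensorProduct.mk K H H).flip y
  | n + 1 => LinearMap.rTensor H (Bop y n)

variable (μ : H →ₗ[K] H →ₗ[K] H)

lemma expDelta_succ (n : ℕ) :
    expDelta K H Δ (n + 1) = LinearMap.rTensor H (expDelta K H Δ n) := rfl

lemma mOp_succ (y : H) (n : ℕ) :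
    mOp K H μ y (n + 1)
      = LinearMap.rTensor H (mOp K H μ y n)
        + LinearMap.lTensor (TP K H n) (μ.flip y) := rfl

lemma dOp_succ (y : H) (n : ℕ) :
    dOp K H y (n + 1)
      = (show TP K H (n + 1) →ₗ[K] TP K H (n + 2) from
          LinearMap.rTensor H (dOp K H y n))
        + (show TP K H (n + 1) →ₗ[K] TP K H (n + 2) from
          (TensorProduct.mk K (TP K H (n + 1)) H).flip y) := rfl

lemma Bop_succ (y : H) (n : ℕ) :
    Bop K H y (n + 1) = LinearMap.rTensor H (Bop K H y n) := rfl

lemma rTensor_comp_mkflip {M N : Type} [AddCommGroup M] [Module K M]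
    [AddCommGroup N] [Module K N] (f : M →ₗ[K] N) (y : H) :
    LinearMap.rTensor H f ∘ₗ (TensorProduct.mk K M H).flip y
      = (TensorProduct.mk K N H).flip y ∘ₗ f := by
  ext t; rfl

lemma lemA (y : H)
    (hdlaw : ∀ x y : H,
      Δ (μ x y) = x ⊗ₜ[K] y + LinearMap.rTensor H (μ.flip y) (Δ x)
        + LinearMap.lTensor H (μ.flip y) (Δ x)) :
    ∀ n, expDelta K H Δ n ∘ₗ mOp K H μ y n
      = mOp K H μ y (n + 1) ∘ₗ expDelta K H Δ n + Bop K H y n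
  | 0 => by
    apply LinearMap.ext; intro x
    simp only [LinearMap.add_apply, LinearMap.comp_apply]
    show Δ (μ x y) = (LinearMap.rTensor H (μ.flip y) (Δ x)
        + LinearMap.lTensor H (μ.flip y) (Δ x)) + (x ⊗ₜ[K] y : H ⊗[K] H)
    rw [hdlaw x y]; abel
  | n + 1 => by
    have ih := lemA y hdlaw n
    show ((LinearMap.rTensor H (expDelta K H Δ n) ∘ₗ
        (LinearMap.rTensor H (mOp K H μ y n) + LinearMap.lTensor (TP K H n) (μ.flip y)) :
          TP K H n ⊗[K] H →ₗ[K] TP K H (n + 1) ⊗[K] H))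
      = (((LinearMap.rTensor H (mOp K H μ y (n + 1))
          + LinearMap.lTensor (TP K H (n + 1)) (μ.flip y)) ∘ₗ
          LinearMap.rTensor H (expDelta K H Δ n) + LinearMap.rTensor H (Bop K H y n) :
          TP K H n ⊗[K] H →ₗ[K] TP K H (n + 1) ⊗[K] H))
    rw [LinearMap.comp_add, LinearMap.add_comp,
      ← LinearMap.rTensor_comp, ih, LinearMap.rTensor_add,
      LinearMap.rTensor_comp, LinearMap.rTensor_comp_lTensor,
      LinearMap.lTensor_comp_rTensor]
    abel

lemma lemB (y : H) :
    ∀ n, expDelta K H Δ (n + 1) ∘ₗ dOp K H y n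
      = dOp K H y (n + 1) ∘ₗ expDelta K H Δ n
        - Bop K H y (n + 1) ∘ₗ expDelta K H Δ n
  | 0 => by
    apply LinearMap.ext; intro x
    show LinearMap.rTensor H Δ (x ⊗ₜ[K] y)
      = (LinearMap.rTensor H ((TensorProduct.mk K H H).flip y) (Δ x)
          + (Δ x ⊗ₜ[K] y : (H ⊗[K] H) ⊗[K] H))
        - LinearMap.rTensor H ((TensorProduct.mk K H H).flip y) (Δ x)
    rw [add_sub_cancel_left]
    rfl
  | n + 1 => by
    have ih := lemB y n
    rw [expDelta_succ K H Δ n] at ih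
    refine LinearMap.ext (fun (z : TP K H n ⊗[K] H) => ?_)
    have ih0 := lemB y n
    have h1 := LinearMap.congr_fun (congrArg (LinearMap.rTensor H) ih0) z
    rw [LinearMap.rTensor_sub, LinearMap.sub_apply, LinearMap.rTensor_comp,
      LinearMap.rTensor_comp, LinearMap.rTensor_comp, LinearMap.comp_apply,
      LinearMap.comp_apply, LinearMap.comp_apply] at h1
    have e1 : LinearMap.rTensor H (expDelta K H Δ (n + 1))
          (LinearMap.rTensor H (dOp K H y n) z + TensorProduct.mk K (TP K H (n + 1)) H z y)
        = LinearMap.rTensor H (expDelta K H Δ (n + 1)) (LinearMap.rTensor H (dOp K H y n) z)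
          + (expDelta K H Δ (n + 1) z ⊗ₜ[K] y) :=
      map_add (LinearMap.rTensor H (expDelta K H Δ (n + 1)))
        (LinearMap.rTensor H (dOp K H y n) z) (TensorProduct.mk K (TP K H (n + 1)) H z y)
    have key := congrArg (· + expDelta K H Δ (n + 1) z ⊗ₜ[K] y) h1
    exact e1.trans (key.trans (sub_add_eq_add_sub _ _ _))

/-- Let `H` be a pre-Lie algebra with a nonassociative
permutative coproduct `Δ` satisfying the distributive law
`Δ(x∘y) = x⊗y + Δ(x)∘y` (where `H^{⊗2}` is a right `H`-module by
derivations).  Then for every `k ≥ 1` (written `k = m+1`),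
`Δᵏ(x∘y) = Δᵏ(x)∘y + δ_y(Δ^{k−1}(x))`, where `δ_y` inserts `y` in all
positions after the first. -/
theorem DIter_of_mul
    (hpre : ∀ a b c : H,
      μ (μ a b) c - μ a (μ b c) = μ (μ a c) b - μ a (μ c b))
    (hnap : swapAdj K H 2 1 ∘ₗ DIter K H Δ 2 = DIter K H Δ 2)
    (hdlaw : ∀ x y : H,
      Δ (μ x y) = x ⊗ₜ[K] y + LinearMap.rTensor H (μ.flip y) (Δ x)
        + LinearMap.lTensor H (μ.flip y) (Δ x)) :
    ∀ (m : ℕ) (x y : H),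
      DIter K H Δ (m + 1) (μ x y) =
        mOp K H μ y (m + 1) (DIter K H Δ (m + 1) x)
          + dOp K H y m (DIter K H Δ m x) := by
  intro m
  induction m with
  | zero =>
    intro x y
    have h := LinearMap.congr_fun (lemA K H Δ μ y hdlaw 0) x
    exact h
  | succ m ih =>
    intro x y
    have hA := LinearMap.congr_fun (lemA K H Δ μ y hdlaw (m + 1))
      (DIter K H Δ (m + 1) x)
    have hB := LinearMap.congr_fun (lemB K H Δ y m) (DIter K H Δ m x)
    have hD : expDelta K H Δ m (DIter K H Δ m x) = DIter K H Δ (m + 1) x := rfl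
    have e1 : DIter K H Δ (m + 2) (μ x y)
        = expDelta K H Δ (m + 1) (DIter K H Δ (m + 1) (μ x y)) := rfl
    rw [e1, ih x y, map_add]
    simp only [LinearMap.comp_apply, LinearMap.add_apply, LinearMap.sub_apply]
      at hA hB
    rw [hA, hB, hD]
    have e2 : expDelta K H Δ (m + 1) (DIter K H Δ (m + 1) x)
        = DIter K H Δ (m + 2) x := rfl
    rw [e2]
    abel
end

section
/- In a non-unital infinitesimal bialgebra H (associative product ·, coassociative coproduct Δ with Δ(x·y) = x⊗y + x_{(1)}⊗x_{(2)}·y + x·y_{(1)}⊗y_{(2)}), the iterated coproduct satisfies for all k ≥ 1: Δᵏ(a·b) = Σ_{i=1}^{k} a_{(1)}⊗…⊗a_{(i)}⊗b_{(1)}⊗…⊗b_{(k+1−i)} + Σ_{i=1}^{k+1} a_{(1)}⊗…⊗a_{(i)}·b_{(1)}⊗…⊗b_{(k+2−i)}. -/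
open TensorProduct

variable (K : Type) [Field K] (H : Type) [AddCommGroup H] [Module K H]

variable (Δ : H →ₗ[K] TensorProduct K H H)

variable (μ : H →ₗ[K] H →ₗ[K] H)

section AuxProof

lemma TP_induction {n : ℕ} {motive : TP K H (n + 1) → Prop} (z : TP K H (n + 1))
    (zero : motive 0) (tmul : ∀ (x : TP K H n) (y : H), motive ((x ⊗ₜ[K] y : TP K H (n + 1))))
    (add : ∀ x y : TP K H (n + 1), motive x → motive y → motive (x + y)) : motive z :=
  TensorProduct.induction_on z zero tmul add

lemma tcast_tcast {m n p : ℕ} (h : m = n) (h' : n = p) (x : TP K H m) :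
    tcast K H h' (tcast K H h x) = tcast K H (h.trans h') x := by
  subst h; subst h'; rfl

lemma tcast_tmul' {m n : ℕ} (h : m = n) (h' : m + 1 = n + 1) (x : TP K H m) (y : H) :
    @Eq (TP K H (n + 1))
      (@TensorProduct.tmul K _ (TP K H n) H _ _ _ _ (tcast K H h x) y)
      (tcast K H h' ((x ⊗ₜ[K] y : TP K H (m + 1)))) := by
  subst h; rfl

lemma expDelta_tcast {m n : ℕ} (h : m = n) (x : TP K H m) :
    expDelta K H Δ n (tcast K H h x)
      = tcast K H (by rw [h]) (expDelta K H Δ m x) := by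
  subst h; rfl

lemma expDelta_tmul (n : ℕ) (x : TP K H n) (y : H) :
    expDelta K H Δ (n + 1) ((x ⊗ₜ[K] y : TP K H (n + 1)))
      = (expDelta K H Δ n x) ⊗ₜ[K] y := rfl

lemma splitE_succ_symm (m n : ℕ) (x : TP K H m) (t : TP K H n) (y : H) :
    (splitE K H m (n + 1)).symm (x ⊗ₜ[K] ((t ⊗ₜ[K] y : TP K H (n + 1))))
      = (((splitE K H m n).symm (x ⊗ₜ[K] t)) ⊗ₜ[K] y : TP K H (m + n + 2)) := by
  rfl

lemma joinMul_succ (p q : ℕ) (x : TP K H p) (t : TP K H q) (y : H) :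
    joinMul K H μ p (q + 1) (x ⊗ₜ[K] ((t ⊗ₜ[K] y : TP K H (q + 1))))
      = ((joinMul K H μ p q (x ⊗ₜ[K] t)) ⊗ₜ[K] y : TP K H (p + q + 1)) := by
  rfl

lemma mulLast_succ (p : ℕ) (x : TP K H p) (y z : H) :
    mulLast K H μ (p + 1) (((x ⊗ₜ[K] y : TP K H (p + 1))) ⊗ₜ[K] z)
      = ((x ⊗ₜ[K] (μ y z)) : TP K H (p + 1)) := by
  rfl

lemma joinMul_one_zero (w : TP K H 1) (y : H) :
    joinMul K H μ 1 0 (w ⊗ₜ[K] (id y : TP K H 0))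
      = LinearMap.lTensor H (μ.flip y) w := by
  induction w using TP_induction K H with
  | zero => simp; exact (map_zero _).symm
  | tmul a c => rfl
  | add w1 w2 h1 h2 => rw [add_tmul, map_add, h1, h2]; exact (map_add _ _ _).symm

lemma joinMul_zero_one (x : H) (w : TP K H 1) :
    joinMul K H μ 0 1 ((id x : TP K H 0) ⊗ₜ[K] w)
      = LinearMap.rTensor H (μ x) w := by
  induction w using TP_induction K H with
  | zero => simp; exact (map_zero _).symm
  | tmul a c => rfl
  | add w1 w2 h1 h2 => rw [tmul_add, map_add, h1, h2]; exact (map_add _ _ _).symm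

lemma L1 (m : ℕ) : ∀ (n : ℕ) (x : TP K H m) (t : TP K H n),
    expDelta K H Δ (m + n + 1) ((splitE K H m n).symm (x ⊗ₜ[K] t))
      = tcast K H (by omega)
          ((splitE K H (m + 1) n).symm ((expDelta K H Δ m x) ⊗ₜ[K] t)) := by
  intro n
  induction n with
  | zero => intro x t; rfl
  | succ n ih =>
    intro x t
    induction t using TP_induction K H with
    | zero => simp
    | tmul u y =>
      rw [splitE_succ_symm, splitE_succ_symm, expDelta_tmul]
      erw [ih]
      exact tcast_tmul' K H _ _ _ _
    | add t1 t2 h1 h2 =>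
      simp only [tmul_add, map_add, h1, h2]

lemma L2 (m : ℕ) : ∀ (n : ℕ) (x : TP K H (m + 1)) (t : TP K H n),
    expDelta K H Δ (m + 1 + n) (joinMul K H μ (m + 1) n (x ⊗ₜ[K] t))
      = tcast K H (by omega)
          (joinMul K H μ (m + 1 + 1) n ((expDelta K H Δ (m + 1) x) ⊗ₜ[K] t)) := by
  intro n
  induction n with
  | zero =>
    intro x t
    induction x using TP_induction K H with
    | zero => simp
    | tmul u y => rfl
    | add x1 x2 h1 h2 =>
      simp only [add_tmul, map_add, h1, h2]
  | succ n ih =>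
    intro x t
    induction t using TP_induction K H with
    | zero => simp
    | tmul u y =>
      rw [joinMul_succ, joinMul_succ]
      erw [expDelta_tmul, ih]
      exact tcast_tmul' K H _ _ _ _
    | add t1 t2 h1 h2 =>
      simp only [tmul_add, map_add, h1, h2]

lemma L3
    (hinf : ∀ x y : H,
      Δ (μ x y) = x ⊗ₜ[K] y + LinearMap.lTensor H (μ.flip y) (Δ x)
        + LinearMap.rTensor H (μ x) (Δ y)) :
    ∀ (n : ℕ) (x : H) (t : TP K H n),
    expDelta K H Δ (0 + n) (joinMul K H μ 0 n ((id x : TP K H 0) ⊗ₜ[K] t))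
      = tcast K H (by omega) ((splitE K H 0 n).symm ((id x : TP K H 0) ⊗ₜ[K] t))
        + tcast K H (by omega)
            (joinMul K H μ 1 n ((id (Δ x) : TP K H 1) ⊗ₜ[K] t))
        + tcast K H (by omega)
            (joinMul K H μ 0 (n + 1)
              ((id x : TP K H 0) ⊗ₜ[K] (expDelta K H Δ n t))) := by
  intro n
  induction n with
  | zero =>
    intro x t
    have e2 : joinMul K H μ 1 0 ((id (Δ x) : TP K H 1) ⊗ₜ[K] (t : TP K H 0))
        = LinearMap.lTensor H (μ.flip t) (Δ x) := joinMul_one_zero K H μ _ _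
    have e3 : joinMul K H μ 0 (0 + 1) ((id x : TP K H 0) ⊗ₜ[K] (expDelta K H Δ 0 t))
        = LinearMap.rTensor H (μ x) (Δ t) := joinMul_zero_one K H μ _ _
    refine Eq.trans (hinf x t) ?_
    rw [← e2, ← e3]
    rfl
  | succ n ih =>
    intro x t
    induction t using TP_induction K H with
    | zero => simp
    | tmul u y =>
      rw [joinMul_succ]
      erw [expDelta_tmul]
      erw [ih]
      rw [add_tmul, add_tmul, splitE_succ_symm]
      rw [joinMul_succ]
      erw [expDelta_tmul]
      rw [joinMul_succ]
      refine congrArg₂ (· + ·) (congrArg₂ (· + ·) ?_ ?_) ?_ <;>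
        exact tcast_tmul' K H _ _ _ _
    | add t1 t2 h1 h2 =>
      simp only [tmul_add, map_add, h1, h2]
      abel

noncomputable def term1 (a b : H) (m n : ℕ) : TP K H (m + n + 1) :=
  (splitE K H m n).symm ((DIter K H Δ m a) ⊗ₜ[K] (DIter K H Δ n b))

noncomputable def term2 (a b : H) (m n : ℕ) : TP K H (m + n) :=
  joinMul K H μ m n ((DIter K H Δ m a) ⊗ₜ[K] (DIter K H Δ n b))

lemma term1_congr (a b : H) (m n n' : ℕ) (h : n = n') :
    term1 K H Δ a b m n' = tcast K H (by rw [h]) (term1 K H Δ a b m n) := by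
  subst h; rfl

lemma term2_congr (a b : H) (m n n' : ℕ) (h : n = n') :
    term2 K H Δ μ a b m n' = tcast K H (by rw [h]) (term2 K H Δ μ a b m n) := by
  subst h; rfl

lemma R1 (a b : H) (m n : ℕ) :
    expDelta K H Δ (m + n + 1) (term1 K H Δ a b m n)
      = tcast K H (by omega) (term1 K H Δ a b (m + 1) n) := by
  rw [term1, L1]; rfl

lemma R2 (a b : H) (m n : ℕ) :
    expDelta K H Δ (m + 1 + n) (term2 K H Δ μ a b (m + 1) n)
      = tcast K H (by omega) (term2 K H Δ μ a b (m + 1 + 1) n) := by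
  rw [term2, L2]; rfl

lemma R3
    (hinf : ∀ x y : H,
      Δ (μ x y) = x ⊗ₜ[K] y + LinearMap.lTensor H (μ.flip y) (Δ x)
        + LinearMap.rTensor H (μ x) (Δ y)) (a b : H) (n : ℕ) :
    expDelta K H Δ (0 + n) (term2 K H Δ μ a b 0 n)
      = tcast K H (by omega) (term1 K H Δ a b 0 n)
        + tcast K H (by omega) (term2 K H Δ μ a b 1 n)
        + tcast K H (by omega) (term2 K H Δ μ a b 0 (n + 1)) := by
  rw [term2]; erw [L3 K H Δ μ hinf]; rfl

noncomputable def G1 (a b : H) (k j : ℕ) : TP K H k :=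
  if h : j < k then tcast K H (by omega) (term1 K H Δ a b j (k - 1 - j)) else 0

noncomputable def G2 (a b : H) (k j : ℕ) : TP K H k :=
  if h : j ≤ k then tcast K H (by omega) (term2 K H Δ μ a b j (k - j)) else 0

lemma G1_step (a b : H) (k j : ℕ) (hj : j < k) :
    expDelta K H Δ k (G1 K H Δ a b k j) = G1 K H Δ a b (k + 1) (j + 1) := by
  rw [G1, dif_pos hj, G1, dif_pos (show j + 1 < k + 1 by omega),
    expDelta_tcast, R1, tcast_tcast,
    term1_congr K H Δ a b (j + 1) (k - 1 - j) (k + 1 - 1 - (j + 1)) (by omega),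
    tcast_tcast]

lemma G2_step (a b : H) (k j : ℕ) (hj1 : 1 ≤ j) (hj : j ≤ k) :
    expDelta K H Δ k (G2 K H Δ μ a b k j) = G2 K H Δ μ a b (k + 1) (j + 1) := by
  obtain ⟨m, rfl⟩ : ∃ m, j = m + 1 := ⟨j - 1, by omega⟩
  rw [G2, dif_pos hj, G2, dif_pos (show m + 1 + 1 ≤ k + 1 by omega),
    expDelta_tcast, R2, tcast_tcast,
    term2_congr K H Δ μ a b (m + 1 + 1) (k - (m + 1)) (k + 1 - (m + 1 + 1)) (by omega),
    tcast_tcast]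

lemma G2_zero_step
    (hinf : ∀ x y : H,
      Δ (μ x y) = x ⊗ₜ[K] y + LinearMap.lTensor H (μ.flip y) (Δ x)
        + LinearMap.rTensor H (μ x) (Δ y)) (a b : H) (k : ℕ) :
    expDelta K H Δ k (G2 K H Δ μ a b k 0)
      = G1 K H Δ a b (k + 1) 0 + G2 K H Δ μ a b (k + 1) 1
        + G2 K H Δ μ a b (k + 1) 0 := by
  rw [G2, dif_pos (Nat.zero_le k), expDelta_tcast, R3 K H Δ μ hinf,
    G1, dif_pos (show 0 < k + 1 by omega),
    G2, dif_pos (show 1 ≤ k + 1 by omega),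
    G2, dif_pos (Nat.zero_le (k + 1)),
    term1_congr K H Δ a b 0 (k - 0) (k + 1 - 1 - 0) (by omega),
    term2_congr K H Δ μ a b 1 (k - 0) (k + 1 - 1) (by omega),
    term2_congr K H Δ μ a b 0 (k - 0 + 1) (k + 1 - 0) (by omega),
    tcast_tcast, tcast_tcast, tcast_tcast, map_add, map_add,
    tcast_tcast, tcast_tcast, tcast_tcast]

lemma main_aux
    (hinf : ∀ x y : H,
      Δ (μ x y) = x ⊗ₜ[K] y + LinearMap.lTensor H (μ.flip y) (Δ x)
        + LinearMap.rTensor H (μ x) (Δ y)) (a b : H) :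
    ∀ k : ℕ, DIter K H Δ (k + 1) (μ a b)
      = (∑ j ∈ Finset.range (k + 1), G1 K H Δ a b (k + 1) j)
        + ∑ j ∈ Finset.range (k + 2), G2 K H Δ μ a b (k + 1) j := by
  intro k
  induction k with
  | zero =>
    have h1 : G1 K H Δ a b 1 0 = a ⊗ₜ[K] b := by
      rw [G1, dif_pos (show 0 < 1 by omega)]; rfl
    have h2 : G2 K H Δ μ a b 1 0 = LinearMap.rTensor H (μ a) (Δ b) := by
      rw [G2, dif_pos (show (0:ℕ) ≤ 1 by omega)]
      exact joinMul_zero_one K H μ a (Δ b)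
    have h3 : G2 K H Δ μ a b 1 1 = LinearMap.lTensor H (μ.flip b) (Δ a) := by
      rw [G2, dif_pos (le_refl 1)]
      exact joinMul_one_zero K H μ (Δ a) b
    rw [Finset.sum_range_one, Finset.sum_range_succ, Finset.sum_range_one,
      h1, h2, h3]
    refine Eq.trans (hinf a b) ?_
    abel
  | succ k ih =>
    have hD : DIter K H Δ (k + 1 + 1) (μ a b)
        = expDelta K H Δ (k + 1) (DIter K H Δ (k + 1) (μ a b)) := rfl
    rw [hD, ih, map_add, map_sum, map_sum]
    rw [Finset.sum_congr rfl (fun j hj => G1_step K H Δ a b (k + 1) j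
      (Finset.mem_range.mp hj))]
    rw [Finset.sum_range_succ' (fun j => expDelta K H Δ (k + 1)
      (G2 K H Δ μ a b (k + 1) j)) (k + 1)]
    rw [Finset.sum_congr rfl (fun j hj => G2_step K H Δ μ a b (k + 1) (j + 1)
      (by omega) (by have := Finset.mem_range.mp hj; omega))]
    rw [G2_zero_step K H Δ μ hinf a b (k + 1)]
    rw [Finset.sum_range_succ' (fun j => G1 K H Δ a b (k + 1 + 1) j) (k + 1)]
    rw [Finset.sum_range_succ' (fun j => G2 K H Δ μ a b (k + 1 + 1) j) (k + 2)]
    rw [Finset.sum_range_succ' (fun j => G2 K H Δ μ a b (k + 1 + 1) (j + 1)) (k + 1)]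
    abel

end AuxProof


/-- In a non-unital infinitesimal bialgebra `H` (associative
product `μ`, coassociative coproduct `Δ` with
`Δ(x·y) = x⊗y + x₍₁₎⊗x₍₂₎·y + x·y₍₁₎⊗y₍₂₎`), the iterated coproduct
satisfies, for all `k ≥ 1`:
`Δᵏ(a·b) = Σ_{i=1}^{k} a₍₁₎⊗…⊗a₍ᵢ₎⊗b₍₁₎⊗…⊗b₍ₖ₊₁₋ᵢ₎
  + Σ_{i=1}^{k+1} a₍₁₎⊗…⊗(a₍ᵢ₎·b₍₁₎)⊗…⊗b₍ₖ₊₂₋ᵢ₎`.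
Here the `i`-th term of the first sum is `(splitE).symm (Δ^{i−1}a ⊗ Δ^{k−i}b)`
and the `i`-th term of the second sum joins `Δ^{i−1}a` and `Δ^{k+1−i}b` by
multiplying the adjacent factors. -/
theorem DIter_mul_infinitesimal
    (hassoc : ∀ a b c : H, μ (μ a b) c = μ a (μ b c))
    (hcoassoc :
      DIter K H Δ 2 =
        (show TensorProduct K H (TensorProduct K H H) →ₗ[K] TP K H 2 from
          (TensorProduct.assoc K H H H).symm.toLinearMap) ∘ₗ
          LinearMap.lTensor H Δ ∘ₗ Δ)
    (hinf : ∀ x y : H,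
      Δ (μ x y) = x ⊗ₜ[K] y + LinearMap.lTensor H (μ.flip y) (Δ x)
        + LinearMap.rTensor H (μ x) (Δ y)) :
    ∀ k : ℕ, 1 ≤ k → ∀ a b : H,
      DIter K H Δ k (μ a b) =
        (∑ j ∈ (Finset.range k).attach,
          tcast K H (show j.1 + (k - 1 - j.1) + 1 = k by
              have := Finset.mem_range.mp j.2; omega)
            ((splitE K H j.1 (k - 1 - j.1)).symm
              (TensorProduct.map (DIter K H Δ j.1) (DIter K H Δ (k - 1 - j.1))
                (a ⊗ₜ[K] b))))
        + (∑ j ∈ (Finset.range (k + 1)).attach,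
          tcast K H (show j.1 + (k - j.1) = k by
              have := Finset.mem_range.mp j.2; omega)
            (joinMul K H μ j.1 (k - j.1)
              (TensorProduct.map (DIter K H Δ j.1) (DIter K H Δ (k - j.1))
                (a ⊗ₜ[K] b)))) := by
  intro k hk a b
  obtain ⟨k', rfl⟩ : ∃ k', k = k' + 1 := ⟨k - 1, by omega⟩
  rw [main_aux K H Δ μ hinf a b k']
  refine congrArg₂ (· + ·) ?_ ?_
  · rw [← Finset.sum_attach (Finset.range (k' + 1))
      (fun j => G1 K H Δ a b (k' + 1) j)]
    refine Finset.sum_congr rfl (fun j _ => ?_)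
    rw [G1, dif_pos (Finset.mem_range.mp j.2)]
    rfl
  · rw [← Finset.sum_attach (Finset.range (k' + 1 + 1))
      (fun j => G2 K H Δ μ a b (k' + 1) j)]
    refine Finset.sum_congr rfl (fun j _ => ?_)
    rw [G2, dif_pos (show j.1 ≤ k' + 1 by have := Finset.mem_range.mp j.2; omega)]
    rfl
end
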